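/- Let 𝔖 be a cofinite G-semimatroid. Then the pair (E_𝔖, rk̲) always satisfies (R2) and (R3): rk̲ is monotone and submodular on subsets of the finite set E_𝔖, with rk̲(∅)=0, so (E_𝔖,rk̲) is a polymatroid. Moreover, (E_𝔖,rk̲) satisfies (R1), i.e., rk̲(A)≤|A| for every A⊆E_𝔖, if and only if the action is weakly translative; in that case (E_𝔖,rk̲) is a matroid. -/

import Mathlib

set_option linter.unusedSectionVars false


open scoped Classical Pointwise


/-- A finitary semimatroid on the ground set `S`: a nonempty, finite-dimensional
simplicial complex `C` of finite subsets of `S` (containing all singletons), together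
with a rank function satisfying (R1)-(R3), (CR1), (CR2). -/
structure FinSemimatroid (S : Type*) [DecidableEq S] where
  C : Set (Finset S)
  rk : Finset S → ℕ
  nonempty : C.Nonempty
  downClosed : ∀ ⦃X Y : Finset S⦄, X ∈ C → Y ⊆ X → Y ∈ C
  singleton_mem : ∀ x : S, ({x} : Finset S) ∈ C
  finDim : ∃ d : ℕ, ∀ X ∈ C, X.card ≤ d
  r1 : ∀ X ∈ C, rk X ≤ X.card
  r2 : ∀ ⦃X Y : Finset S⦄, X ∈ C → Y ∈ C → X ⊆ Y → rk X ≤ rk Y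
  r3 : ∀ ⦃X Y : Finset S⦄, X ∈ C → Y ∈ C → X ∪ Y ∈ C →
    rk (X ∪ Y) + rk (X ∩ Y) ≤ rk X + rk Y
  cr1 : ∀ ⦃X Y : Finset S⦄, X ∈ C → Y ∈ C → rk X = rk (X ∩ Y) → X ∪ Y ∈ C
  cr2 : ∀ ⦃X Y : Finset S⦄, X ∈ C → Y ∈ C → rk X < rk Y →
    ∃ y ∈ Y, y ∉ X ∧ insert y X ∈ C

namespace FinSemimatroid

variable {S : Type*} [DecidableEq S]

/-- The closure of a central set. -/
def cl (M : FinSemimatroid S) (X : Finset S) : Set S :=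
  {y : S | insert y X ∈ M.C ∧ M.rk (insert y X) = M.rk X}

/-- A flat is a closed central set. -/
def IsFlat (M : FinSemimatroid S) (X : Finset S) : Prop :=
  X ∈ M.C ∧ M.cl X = (X : Set S)

/-- The poset of flats, ordered by inclusion. -/
abbrev Flats (M : FinSemimatroid S) : Type _ := {X : Finset S // M.IsFlat X}

/-- A simple finitary semimatroid. -/
def Simple (M : FinSemimatroid S) : Prop :=
  (∀ x : S, M.rk {x} = 1) ∧
    ∀ x y : S, x ≠ y → ({x, y} : Finset S) ∈ M.C → M.rk {x, y} = 2

end FinSemimatroid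

/-- A poset is chain-finite if all its chains are finite. -/
def ChainFinite (L : Type*) [PartialOrder L] : Prop :=
  ∀ c : Set L, IsChain (· ≤ ·) c → c.Finite

/-- An atom of a bounded-below poset: an element covering the minimum. -/
def PosetAtom {L : Type*} [PartialOrder L] (a : L) : Prop :=
  ∃ bot : L, IsBot bot ∧ bot ⋖ a

/-- `L` (with rank function `rk`) is a finite geometric lattice (finite, bounded below,
a lattice, ranked by `rk`, atomic and semimodular) with at most `N` atoms. -/
def IsFinGeomLatticeAtMost (L : Type*) [PartialOrder L] (rk : L → ℕ) (N : ℕ) : Prop :=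
  Finite L ∧
    ∃ bot : L, IsBot bot ∧
      (∀ x y : L, ∃ m : L, IsGLB {x, y} m) ∧
      (∀ x y : L, ∃ j : L, IsLUB {x, y} j) ∧
      (∀ x y : L, x ⋖ y → rk y = rk x + 1) ∧
      (∀ x : L, ∃ A : Set L, (∀ a ∈ A, bot ⋖ a) ∧ IsLUB A x) ∧
      (∀ x y m j : L, IsGLB {x, y} m → IsLUB {x, y} j → rk j + rk m ≤ rk x + rk y) ∧
      Nat.card {a : L | bot ⋖ a} ≤ N
/-- A `G`-semimatroid: an action of `G` on a finitary semimatroid, preserving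
centrality and rank. -/
structure GSemimatroid (G S : Type*) [Group G] [MulAction G S] [DecidableEq S]
    extends FinSemimatroid S where
  smul_mem : ∀ (g : G) ⦃X : Finset S⦄, X ∈ C → X.image (g • ·) ∈ C
  rk_smul : ∀ (g : G) ⦃X : Finset S⦄, X ∈ C → rk (X.image (g • ·)) = rk X

namespace GSemimatroid

variable {G S : Type*} [Group G] [MulAction G S] [DecidableEq S]

/-- The set of orbits `E_𝔖 = S/G`. -/
abbrev E (G S : Type*) [Group G] [MulAction G S] : Type _ :=
  Quotient (MulAction.orbitRel G S)

/-- The orbit of a point. -/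
def orbOf (G : Type*) {S : Type*} [Group G] [MulAction G S] (x : S) : E G S :=
  Quotient.mk (MulAction.orbitRel G S) x

/-- `X̲`: the set of orbits met by `X`. -/
def under (G : Type*) {S : Type*} [Group G] [MulAction G S] (X : Finset S) :
    Set (E G S) :=
  orbOf G '' (X : Set S)

variable (M : GSemimatroid G S)

/-- `𝒞̲ = {X̲ : X ∈ 𝒞}`. -/
def CQ : Set (Set (E G S)) := {A | ∃ X ∈ M.C, under G X = A}

/-- `rk̲ A = max { rk X : X ∈ 𝒞, X̲ ⊆ A }`. -/
noncomputable def rkQ (A : Set (E G S)) : ℕ :=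
  sSup {n : ℕ | ∃ X ∈ M.C, under G X ⊆ A ∧ M.rk X = n}

/-- `𝒞_A`: the central sets lying over `A`. -/
def CA (A : Set (E G S)) : Set (Finset S) := {X | X ∈ M.C ∧ under G X = A}

/-- The type of central sets. -/
abbrev Cen : Type _ := {X : Finset S // X ∈ M.C}

/-- The `G`-orbit relation on central sets. -/
def cenRel (X Y : M.Cen) : Prop := ∃ g : G, X.1.image (g • ·) = Y.1

/-- The set `𝒞/G` of orbits of central sets. -/
def COrb : Type _ := Quot M.cenRel

/-- The action is cofinite if `𝒞/G` is finite. -/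
def Cofinite : Prop := Finite M.COrb

/-- `m_𝔖(A) = |𝒞_A / G|`. -/
noncomputable def m (A : Set (E G S)) : ℕ :=
  Nat.card {O : M.COrb // ∃ X : M.Cen, under G X.1 = A ∧ Quot.mk M.cenRel X = O}

def WeaklyTranslative : Prop :=
  ∀ (g : G) (x : S), ({x, g • x} : Finset S) ∈ M.C →
    M.rk {x, g • x} = M.rk ({x} : Finset S)

def Translative : Prop :=
  ∀ (g : G) (x : S), ({x, g • x} : Finset S) ∈ M.C → g • x = x

def Centered : Prop := ∃ X ∈ M.C, under G X = (Set.univ : Set (E G S))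

def Normal (_M : GSemimatroid G S) : Prop :=
  ∀ x : S, Subgroup.Normal (MulAction.stabilizer G x)

def AlmostArithmetic : Prop := M.Translative ∧ M.Normal

/-- The action is arithmetic: almost-arithmetic, and for every central `X` the set
`W(X) ⊆ Γ^X` is a subgroup (expressed via representative families of group elements). -/
def Arithmetic : Prop :=
  M.AlmostArithmetic ∧
    ∀ ⦃X : Finset S⦄, X ∈ M.C → ∀ γ δ : S → G,
      X.image (fun x => γ x • x) ∈ M.C → X.image (fun x => δ x • x) ∈ M.C →
        X.image (fun x => (γ x * δ x) • x) ∈ M.C ∧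
          X.image (fun x => (γ x)⁻¹ • x) ∈ M.C

/-- Remove from `X` all elements of the orbit `a₀`. -/
noncomputable def strip (a₀ : E G S) (X : Finset S) : Finset S :=
  X.filter (fun x => orbOf G x ≠ a₀)

/-- The Tutte polynomial of a `G`-semimatroid, as a function `ℤ × ℤ → ℤ`. -/
noncomputable def Tutte (x y : ℤ) : ℤ :=
  ∑ᶠ A ∈ M.CQ, (M.m A : ℤ) * (x - 1) ^ (M.rkQ Set.univ - M.rkQ A) *
    (y - 1) ^ (Nat.card A - M.rkQ A)

end GSemimatroid

open GSemimatroid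

namespace GSemimatroid

variable {G S : Type*} [Group G] [MulAction G S] [DecidableEq S] (M : GSemimatroid G S)

lemma aux_empty_mem : (∅ : Finset S) ∈ M.C := by
  obtain ⟨X, hX⟩ := M.nonempty
  exact M.downClosed hX (Finset.empty_subset X)

lemma aux_rk_empty : M.rk ∅ = 0 :=
  Nat.le_zero.mp (by simpa using M.r1 ∅ (aux_empty_mem M))

lemma aux_under_mono {X Y : Finset S} (h : X ⊆ Y) : under G X ⊆ under G Y :=
  Set.image_mono (by exact_mod_cast h)

lemma aux_under_union (X Y : Finset S) :
    under G (X ∪ Y) = under G X ∪ under G Y := by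
  simp [under, Set.image_union]

/-- The defining set for `rkQ`. -/
def rkSet (A : Set (E G S)) : Set ℕ :=
  {n : ℕ | ∃ X ∈ M.C, under G X ⊆ A ∧ M.rk X = n}

lemma aux_rkQ_def (A : Set (E G S)) : M.rkQ A = sSup (M.rkSet A) := rfl

lemma aux_zero_mem (A : Set (E G S)) : 0 ∈ M.rkSet A :=
  ⟨∅, aux_empty_mem M, by simp [under], aux_rk_empty M⟩

lemma aux_bdd (A : Set (E G S)) : BddAbove (M.rkSet A) := by
  obtain ⟨d, hd⟩ := M.finDim
  exact ⟨d, fun n hn => by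
    obtain ⟨X, hX, -, hr⟩ := hn
    exact hr ▸ (M.r1 X hX).trans (hd X hX)⟩

lemma aux_le_rkQ {A : Set (E G S)} {n : ℕ} (hn : n ∈ M.rkSet A) : n ≤ M.rkQ A :=
  le_csSup (M.aux_bdd A) hn

lemma aux_rkQ_le {A : Set (E G S)} {m : ℕ} (h : ∀ n ∈ M.rkSet A, n ≤ m) :
    M.rkQ A ≤ m :=
  csSup_le ⟨0, M.aux_zero_mem A⟩ h

lemma aux_rkQ_mem (A : Set (E G S)) : M.rkQ A ∈ M.rkSet A :=
  Nat.sSup_mem ⟨0, M.aux_zero_mem A⟩ (M.aux_bdd A)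

lemma aux_extend : ∀ (n : ℕ) (X Z : Finset S), X ∈ M.C → Z ∈ M.C →
    (Z \ X).card ≤ n →
    ∃ Y ∈ M.C, X ⊆ Y ∧ Y ⊆ X ∪ Z ∧ M.rk Z ≤ M.rk Y := by
  intro n
  induction n with
  | zero =>
    intro X Z hX hZ hc
    have hsub : Z ⊆ X := Finset.sdiff_eq_empty_iff_subset.mp
      (Finset.card_eq_zero.mp (Nat.le_zero.mp hc))
    exact ⟨X, hX, subset_refl _, Finset.subset_union_left, M.r2 hZ hX hsub⟩
  | succ n ih =>
    intro X Z hX hZ hc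
    by_cases h : M.rk Z ≤ M.rk X
    · exact ⟨X, hX, subset_refl _, Finset.subset_union_left, h⟩
    · obtain ⟨y, hyZ, hyX, hins⟩ := M.cr2 hX hZ (lt_of_not_ge h)
      have hmem : y ∈ Z \ X := Finset.mem_sdiff.mpr ⟨hyZ, hyX⟩
      have hcard : (Z \ insert y X).card ≤ n := by
        rw [Finset.sdiff_insert, Finset.card_erase_of_mem hmem]
        omega
      obtain ⟨Y, hY, h1, h2, h3⟩ := ih (insert y X) Z hins hZ hcard
      refine ⟨Y, hY, (Finset.subset_insert y X).trans h1, h2.trans ?_, h3⟩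
      intro a ha
      rcases Finset.mem_union.mp ha with ha | ha
      · rcases Finset.mem_insert.mp ha with rfl | ha
        · exact Finset.mem_union_right _ hyZ
        · exact Finset.mem_union_left _ ha
      · exact Finset.mem_union_right _ ha

lemma aux_orbOf_smul (g : G) (x : S) : orbOf G (g • x) = orbOf G x :=
  Quot.sound (MulAction.mem_orbit x g)

lemma aux_under_smul (g : G) (X : Finset S) :
    under G (X.image (g • ·)) = under G X := by
  unfold under
  rw [Finset.coe_image, Set.image_image]
  exact Set.image_congr fun x _ => aux_orbOf_smul g x

lemma aux_E_finite (hcof : M.Cofinite) : Finite (E G S) := by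
  have : Finite M.COrb := hcof
  have h1 : ∀ x y : S, (MulAction.orbitRel G S).r x y →
      Quot.mk M.cenRel ⟨{x}, M.singleton_mem x⟩ =
        Quot.mk M.cenRel ⟨{y}, M.singleton_mem y⟩ := by
    intro x y hxy
    obtain ⟨g, hg⟩ := hxy
    exact (Quot.sound ⟨g, by simp [Finset.image_singleton, hg]⟩).symm
  let f : E G S → M.COrb := fun e =>
    Quot.lift (fun x => Quot.mk M.cenRel ⟨{x}, M.singleton_mem x⟩) h1 e
  have h2 : ∀ (a b : M.Cen), M.cenRel a b → under G a.1 = under G b.1 := by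
    intro a b ⟨g, hg⟩
    rw [← hg, aux_under_smul]
  let u : M.COrb → Set (E G S) := Quot.lift (fun X => under G X.1) h2
  have hinj : Function.Injective f := by
    intro e1 e2 he
    obtain ⟨x, rfl⟩ := Quot.exists_rep e1
    obtain ⟨y, rfl⟩ := Quot.exists_rep e2
    have : u (f (Quot.mk _ x)) = u (f (Quot.mk _ y)) := by rw [he]
    have h3 : ({orbOf G x} : Set (E G S)) = {orbOf G y} := by
      simpa [u, f, under] using this
    have := Set.singleton_eq_singleton_iff.mp h3
    exact this
  exact Finite.of_injective f hinj

lemma aux_wt_rk (hwt : M.WeaklyTranslative) :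
    ∀ (n : ℕ) (X : Finset S), X ∈ M.C → X.card ≤ n →
      M.rk X ≤ (X.image (orbOf G)).card := by
  intro n
  induction n with
  | zero =>
    intro X hX hc
    have : X = ∅ := Finset.card_eq_zero.mp (Nat.le_zero.mp hc)
    subst this
    simp [aux_rk_empty M]
  | succ n ih =>
    intro X hX hc
    by_cases hinj : ∀ x ∈ X, ∀ y ∈ X, orbOf G x = orbOf G y → x = y
    · rw [Finset.card_image_of_injOn fun a ha b hb => hinj a ha b hb]
      exact M.r1 X hX
    · push_neg at hinj
      obtain ⟨x', hx', x, hx, horb, hne⟩ := hinj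
      obtain ⟨g, hg⟩ : ∃ g : G, g • x' = x := by
        have := Quotient.exact horb
        obtain ⟨g, hg⟩ := this
        exact ⟨g⁻¹, by rw [← hg, inv_smul_smul]⟩
      have hPsub : ({x', x} : Finset S) ⊆ X := by
        intro a ha
        rcases Finset.mem_insert.mp ha with rfl | ha
        · exact hx'
        · rwa [Finset.mem_singleton.mp ha]
      have hP : ({x', x} : Finset S) ∈ M.C := M.downClosed hX hPsub
      have hrkP : M.rk {x', x} = M.rk {x'} := by
        have := hwt g x' (by rwa [hg])
        rwa [hg] at this
      have hYC : X.erase x ∈ M.C := M.downClosed hX (Finset.erase_subset x X)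
      have hunion : X.erase x ∪ {x', x} = X := by
        ext a
        simp only [Finset.mem_union, Finset.mem_erase, Finset.mem_insert,
          Finset.mem_singleton]
        constructor
        · rintro (⟨-, ha⟩ | rfl | rfl) <;> first | exact ha | exact hx' | exact hx
        · intro ha
          by_cases hax : a = x
          · exact Or.inr (Or.inr hax)
          · exact Or.inl ⟨hax, ha⟩
      have hinter : X.erase x ∩ {x', x} = {x'} := by
        ext a
        simp only [Finset.mem_inter, Finset.mem_erase, Finset.mem_insert,
          Finset.mem_singleton]
        constructor
        · rintro ⟨⟨hax, -⟩, rfl | rfl⟩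
          · rfl
          · exact absurd rfl hax
        · rintro rfl
          exact ⟨⟨hne, hx'⟩, Or.inl rfl⟩
      have h3 := M.r3 hYC hP (by rwa [hunion])
      rw [hunion, hinter, hrkP] at h3
      have hrkle : M.rk X ≤ M.rk (X.erase x) := by omega
      have himg : X.image (orbOf G) = (X.erase x).image (orbOf G) := by
        ext b
        simp only [Finset.mem_image, Finset.mem_erase]
        constructor
        · rintro ⟨a, ha, rfl⟩
          by_cases hax : a = x
          · exact ⟨x', ⟨hne, hx'⟩, by rw [hax, ← horb]⟩
          · exact ⟨a, ⟨hax, ha⟩, rfl⟩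
        · rintro ⟨a, ⟨-, ha⟩, rfl⟩
          exact ⟨a, ha, rfl⟩
      have hcard : (X.erase x).card ≤ n := by
        rw [Finset.card_erase_of_mem hx]
        omega
      calc M.rk X ≤ M.rk (X.erase x) := hrkle
        _ ≤ ((X.erase x).image (orbOf G)).card := ih (X.erase x) hYC hcard
        _ = (X.image (orbOf G)).card := by rw [himg]

lemma aux_card_under (X : Finset S) :
    Nat.card (under G X) = (X.image (orbOf G)).card := by
  have : under G X = ↑(X.image (orbOf G)) := by
    rw [Finset.coe_image]; rfl
  rw [this, Nat.card_coe_set_eq, Set.ncard_coe_finset]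

end GSemimatroid

/-- For a cofinite `G`-semimatroid, `rk̲` is normalized, monotone and
submodular (so `(E_𝔖, rk̲)` is a polymatroid); it satisfies (R1) iff the action is
weakly translative (and then `(E_𝔖, rk̲)` is a matroid). -/
theorem orbitRank_polymatroid_and_R1_iff_weaklyTranslative
    {G S : Type*} [Group G] [MulAction G S] [DecidableEq S]
    (M : GSemimatroid G S) (hcof : M.Cofinite) :
    M.rkQ (∅ : Set (E G S)) = 0 ∧
    (∀ A B : Set (E G S), A ⊆ B → M.rkQ A ≤ M.rkQ B) ∧
    (∀ A B : Set (E G S), M.rkQ (A ∪ B) + M.rkQ (A ∩ B) ≤ M.rkQ A + M.rkQ B) ∧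
    ((∀ A : Set (E G S), M.rkQ A ≤ Nat.card A) ↔ M.WeaklyTranslative) := by
  constructor
  · refine le_antisymm (M.aux_rkQ_le ?_) (Nat.zero_le _)
    rintro n ⟨X, hX, hu, rfl⟩
    have hXe : X = ∅ := by
      rw [← Finset.coe_eq_empty, ← Set.image_eq_empty (f := orbOf G)]
      exact Set.subset_empty_iff.mp hu
    rw [hXe, aux_rk_empty M]
  refine ⟨?_, ?_, ?_⟩
  · -- monotonicity
    intro A B hAB
    refine M.aux_rkQ_le ?_
    rintro n ⟨X, hX, hu, rfl⟩
    exact M.aux_le_rkQ ⟨X, hX, hu.trans hAB, rfl⟩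
  · -- submodularity
    intro A B
    obtain ⟨X, hXC, hXu, hXr⟩ := M.aux_rkQ_mem (A ∩ B)
    obtain ⟨Z, hZC, hZu, hZr⟩ := M.aux_rkQ_mem (A ∪ B)
    obtain ⟨Y, hYC, hXY, hYXZ, hrZY⟩ := M.aux_extend (Z \ X).card X Z hXC hZC le_rfl
    have hYu : under G Y ⊆ A ∪ B := by
      refine (aux_under_mono hYXZ).trans ?_
      rw [aux_under_union]
      exact Set.union_subset (hXu.trans (Set.inter_subset_left.trans
        Set.subset_union_left)) hZu
    set YA := Y.filter (fun y => orbOf G y ∈ A) with hYAdef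
    set YB := Y.filter (fun y => orbOf G y ∈ B) with hYBdef
    have hYAC : YA ∈ M.C := M.downClosed hYC (Finset.filter_subset _ _)
    have hYBC : YB ∈ M.C := M.downClosed hYC (Finset.filter_subset _ _)
    have hunion : YA ∪ YB = Y := by
      ext a
      simp only [hYAdef, hYBdef, Finset.mem_union, Finset.mem_filter]
      constructor
      · rintro (⟨ha, -⟩ | ⟨ha, -⟩) <;> exact ha
      · intro ha
        rcases hYu ⟨a, ha, rfl⟩ with h | h
        · exact Or.inl ⟨ha, h⟩
        · exact Or.inr ⟨ha, h⟩
    have hXsub : X ⊆ YA ∩ YB := by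
      intro a ha
      have haY : a ∈ Y := hXY ha
      have haAB : orbOf G a ∈ A ∩ B := hXu ⟨a, ha, rfl⟩
      simp only [hYAdef, hYBdef, Finset.mem_inter, Finset.mem_filter]
      exact ⟨⟨haY, haAB.1⟩, haY, haAB.2⟩
    have hIC : YA ∩ YB ∈ M.C := M.downClosed hYAC Finset.inter_subset_left
    have h3 := M.r3 hYAC hYBC (by rwa [hunion])
    rw [hunion] at h3
    have hrYA : M.rk YA ≤ M.rkQ A := by
      refine M.aux_le_rkQ ⟨YA, hYAC, ?_, rfl⟩
      rintro b ⟨a, ha, rfl⟩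
      exact (Finset.mem_filter.mp ha).2
    have hrYB : M.rk YB ≤ M.rkQ B := by
      refine M.aux_le_rkQ ⟨YB, hYBC, ?_, rfl⟩
      rintro b ⟨a, ha, rfl⟩
      exact (Finset.mem_filter.mp ha).2
    have hXI : M.rk X ≤ M.rk (YA ∩ YB) := M.r2 hXC hIC hXsub
    have hZY : M.rk Z ≤ M.rk Y := hrZY
    omega
  · -- (R1) iff weakly translative
    have hEfin : Finite (E G S) := M.aux_E_finite hcof
    constructor
    · -- R1 → weakly translative
      intro hR1 g x hpair
      by_cases hxx : g • x = x
      · rw [hxx, Finset.pair_eq_singleton x]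
      · have hx1 : M.rk {x} ≤ 1 := by simpa using M.r1 {x} (M.singleton_mem x)
        have hgx : M.rk {g • x} = M.rk ({x} : Finset S) := by
          have := M.rk_smul g (M.singleton_mem x)
          simpa [Finset.image_singleton] using this
        rcases Nat.le_one_iff_eq_zero_or_eq_one.mp hx1 with h0 | h1
        · -- rank zero case
          have hun : ({x} : Finset S) ∪ {g • x} = {x, g • x} := by
            ext a; simp [Finset.mem_union, Finset.mem_insert]
          have hin : ({x} : Finset S) ∩ {g • x} = ∅ := by
            ext a
            simp only [Finset.mem_inter, Finset.mem_singleton, Finset.notMem_empty,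
              iff_false, not_and]
            rintro rfl
            exact fun h => hxx h.symm
          have h3 := M.r3 (M.singleton_mem x) (M.singleton_mem (g • x))
            (by rwa [hun])
          rw [hun, hin, aux_rk_empty M, hgx, h0] at h3
          omega
        · have hle : M.rk ({x} : Finset S) ≤ M.rk {x, g • x} :=
            M.r2 (M.singleton_mem x) hpair (by
              intro a ha
              rw [Finset.mem_singleton.mp ha]
              exact Finset.mem_insert_self x _)
          have hub : M.rk {x, g • x} ≤ Nat.card (under G ({x, g • x} : Finset S)) := by
            refine le_trans (M.aux_le_rkQ ⟨{x, g • x}, hpair, subset_refl _, rfl⟩) ?_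
            exact hR1 _
          have hcard1 : Nat.card (under G ({x, g • x} : Finset S)) = 1 := by
            have himg : ({x, g • x} : Finset S).image (orbOf G) = {orbOf G x} := by
              ext b
              simp only [Finset.mem_image, Finset.mem_insert, Finset.mem_singleton]
              constructor
              · rintro ⟨a, rfl | rfl, rfl⟩
                · rfl
                · exact aux_orbOf_smul g x
              · rintro rfl
                exact ⟨x, Or.inl rfl, rfl⟩
            rw [aux_card_under, himg, Finset.card_singleton]
          omega
    · -- weakly translative → R1
      intro hwt A
      refine M.aux_rkQ_le ?_
      rintro n ⟨X, hX, hu, rfl⟩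
      have h1 : M.rk X ≤ (X.image (orbOf G)).card := M.aux_wt_rk hwt X.card X hX le_rfl
      have h2 : (X.image (orbOf G)).card = Nat.card (under G X) :=
        (aux_card_under X).symm
      have h3 : Nat.card (under G X) ≤ Nat.card A :=
        Nat.card_mono (Set.toFinite A) hu
      omega
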